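/- Let G be a looped simple graph with n vertices. Suppose there is an integer matrix P with n rows and columns indexed by W(G) such that: (i) every n×n submatrix of P obtained by selecting exactly one column from each triple {φ_G(v), χ_G(v), ψ_G(v)} has determinant in {−1, 0, 1}; and (ii) for every subtransversal S of W(G), the rank over ℝ of the columns of P indexed by S equals the rank over GF(2) of the columns of IAS(G) indexed by S. Then for every field F, the entrywise image of P in F also satisfies: for every subtransversal S of W(G), the rank over F of the columns indexed by S equals the rank over GF(2) of the columns of IAS(G) indexed by S. In particular, Z₃(G) is representable over every field. -/

import Mathlib

open Matrix

noncomputable section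

/-- The rank over `F` of the set of columns of `M` indexed by `S`. -/
def colSpanRank (F : Type*) [Field F] {m n : Type*} (M : Matrix m n F) (S : Set n) : ℕ :=
  Module.finrank F ↥(Submodule.span F ((fun j i => M i j) '' S))

/-- A subtransversal of `W(G) = V × {φ,χ,ψ}`: at most one element of each triple. -/
def Subtransversal3 {V : Type*} (S : Set (V × Fin 3)) : Prop :=
  ∀ v i j, (v, i) ∈ S → (v, j) ∈ S → i = j

/-- The matrix `IAS(G) = (I | A | I + A)` over GF(2); the columns `(v,0)`, `(v,1)`,
`(v,2)` are `φ_G(v)`, `χ_G(v)`, `ψ_G(v)` respectively. -/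
def IASmat {V : Type*} [DecidableEq V] (A : Matrix V V (ZMod 2)) :
    Matrix V (V × Fin 3) (ZMod 2) :=
  Matrix.of fun v p =>
    if p.2 = 0 then (if v = p.1 then 1 else 0)
    else if p.2 = 1 then A v p.1
    else (if v = p.1 then 1 else 0) + A v p.1

/-- The isotropic 3-matroid `Z₃(G)` is representable over `F`: some matrix over `F`
with columns indexed by `W(G)` has the same rank as `IAS(G)` on every subtransversal. -/
def Z3Rep (F : Type*) [Field F] {V : Type*} [Fintype V] [DecidableEq V]
    (A : Matrix V V (ZMod 2)) : Prop :=
  ∃ (k : ℕ) (P : Matrix (Fin k) (V × Fin 3) F),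
    ∀ S : Set (V × Fin 3), Subtransversal3 S →
      colSpanRank F P S = colSpanRank (ZMod 2) (IASmat A) S


/-! ### Auxiliary results: transferring linear (in)dependence of integer vectors
between fields -/

set_option linter.unusedSectionVars false

/-- From a real linear dependence of integer vectors, extract a primitive integer dependence. -/
lemma int_dep_of_real_dep {ι V : Type} [Fintype ι] [Fintype V] (N : ι → V → ℤ)
    (hdep : ¬ LinearIndependent ℝ (fun i => fun v => ((N i v : ℝ)))) :
    ∃ c : ι → ℤ, Finset.univ.gcd c = 1 ∧ ∀ v, ∑ i, c i * N i v = 0 := by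
  obtain ⟨g, hgsum, i0, hgi0⟩ := Fintype.not_linearIndependent_iff.mp hdep
  have hsum : ∀ v, ∑ i, g i * (N i v : ℝ) = 0 := by
    intro v
    have := congrFun hgsum v
    simpa [Finset.sum_apply] using this
  -- pass to rational coefficients
  set W := Submodule.span ℚ (Set.range g) with hW
  have : FiniteDimensional ℚ W := FiniteDimensional.span_of_finite ℚ (Set.finite_range g)
  let bW := Module.finBasis ℚ W
  set gW : ι → W := fun i => ⟨g i, Submodule.subset_span (Set.mem_range_self i)⟩ with hgW
  have key : ∀ v : V, (∑ i, ((N i v : ℚ)) • gW i) = (0 : W) := by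
    intro v
    apply Subtype.ext
    push_cast [Submodule.coe_smul]
    simp only [Rat.smul_def]
    push_cast
    rw [← hsum v]
    exact Finset.sum_congr rfl fun i _ => mul_comm _ _
  have keyr : ∀ (v : V) (k), ∑ i, (N i v : ℚ) * (bW.repr (gW i) k) = 0 := by
    intro v k
    have h1 := congrArg (fun w => (bW.repr w : _ →₀ ℚ) k) (key v)
    simpa [map_sum, Finsupp.sum_apply, smul_eq_mul] using h1
  have hgW0 : bW.repr (gW i0) ≠ 0 := by
    intro h
    apply hgi0
    have : gW i0 = 0 := by
      apply bW.repr.injective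
      simpa using h
    exact congrArg Subtype.val this
  obtain ⟨k0, hk0⟩ : ∃ k0, bW.repr (gW i0) k0 ≠ 0 := by
    by_contra h
    push_neg at h
    exact hgW0 (Finsupp.ext h)
  set q : ι → ℚ := fun i => bW.repr (gW i) k0 with hq
  -- clear denominators
  set D : ℕ := ∏ i, (q i).den with hD
  have hDne : (D : ℚ) ≠ 0 := by
    simp only [hD]
    push_cast
    exact Finset.prod_ne_zero_iff.mpr fun i _ => by exact_mod_cast (q i).den_nz
  have hinteg : ∀ i : ι, ∃ ci : ℤ, (ci : ℚ) = q i * D := by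
    intro i
    obtain ⟨e, he⟩ := Finset.dvd_prod_of_mem (fun i => (q i).den) (Finset.mem_univ i)
    refine ⟨(q i).num * e, ?_⟩
    push_cast
    rw [← hD] at he
    rw [he]
    push_cast
    rw [← mul_assoc]
    congr 1
    exact_mod_cast (Rat.mul_den_eq_num (q i)).symm
  choose c hc using hinteg
  have hcsum : ∀ v, ∑ i, c i * N i v = 0 := by
    intro v
    have : ((∑ i, c i * N i v : ℤ) : ℚ) = 0 := by
      push_cast
      rw [show ∑ i, (c i : ℚ) * (N i v : ℚ) = D * ∑ i, (N i v : ℚ) * q i from ?_]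
      · rw [keyr v k0, mul_zero]
      · rw [Finset.mul_sum]
        exact Finset.sum_congr rfl fun i _ => by rw [hc i]; ring
    exact_mod_cast this
  have hci0 : c i0 ≠ 0 := by
    intro h
    apply hk0
    have := hc i0
    rw [h] at this
    push_cast at this
    rcases mul_eq_zero.mp this.symm with h1 | h1
    · exact h1
    · exact absurd h1 hDne
  -- extract gcd
  have hne : Nonempty ι := ⟨i0⟩
  obtain ⟨c', hc'e, hc'1⟩ := Finset.extract_gcd c Finset.univ_nonempty
  have hd0 : Finset.univ.gcd c ≠ 0 := by
    intro h
    exact hci0 (Finset.gcd_eq_zero_iff.mp h i0 (Finset.mem_univ i0))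
  refine ⟨c', hc'1, fun v => ?_⟩
  have : Finset.univ.gcd c * (∑ i, c' i * N i v) = 0 := by
    rw [Finset.mul_sum, ← hcsum v]
    exact Finset.sum_congr rfl fun i _ => by rw [hc'e i (Finset.mem_univ i)]; ring
  rcases mul_eq_zero.mp this with h | h
  · exact absurd h hd0
  · exact h

/-- Integer vectors that are independent after reduction to a field `F` are
independent over `ℝ`. -/
lemma real_indep_of_F_indep (F : Type) [Field F] {ι V : Type} [Fintype ι] [Fintype V]
    (N : ι → V → ℤ)
    (hF : LinearIndependent F (fun i => fun v => ((N i v : F)))) :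
    LinearIndependent ℝ (fun i => fun v => ((N i v : ℝ))) := by
  by_contra hdep
  obtain ⟨c, hgcd, hsum⟩ := int_dep_of_real_dep N hdep
  have hall : ∀ i, ((c i : F)) = 0 := by
    apply Fintype.linearIndependent_iff.mp hF (fun i => (c i : F))
    funext v
    simp only [Finset.sum_apply, Pi.smul_apply, smul_eq_mul, Pi.zero_apply]
    have : ((∑ i, c i * N i v : ℤ) : F) = 0 := by rw [hsum v]; simp
    push_cast at this
    exact this
  have hdvd : ∀ i, ((ringChar F : ℤ)) ∣ c i := fun i =>
    (CharP.intCast_eq_zero_iff F (ringChar F) (c i)).mp (hall i)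
  have : ((ringChar F : ℤ)) ∣ Finset.univ.gcd c :=
    Finset.dvd_gcd fun i _ => hdvd i
  rw [hgcd] at this
  have h1 : ringChar F ∣ 1 := by exact_mod_cast this
  exact CharP.ringChar_ne_one (Nat.dvd_one.mp h1)

/-! ### The GF(2) side: extending independent subtransversals of the isotropic matroid -/

section GF2
variable {V : Type} [Fintype V] [DecidableEq V] (A : Matrix V V (ZMod 2))

/-- A column of `IASmat` as a vector. -/
def iasCol (p : V × Fin 3) : V → ZMod 2 := fun u => IASmat A u p

/-- The `φ`-coefficient of a column. -/
def alph : Fin 3 → ZMod 2 := ![1, 0, 1]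

/-- The `χ`-coefficient of a column. -/
def bet : Fin 3 → ZMod 2 := ![0, 1, 1]

lemma iasCol_eq (v : V) (i : Fin 3) (u : V) :
    iasCol A (v, i) u = alph i * (if u = v then 1 else 0) + bet i * A u v := by
  fin_cases i <;> simp [iasCol, IASmat, alph, bet, eq_comm]

lemma iasCol_phi (v u : V) : iasCol A (v, 0) u = if u = v then 1 else 0 := by
  simp [iasCol, IASmat, eq_comm]

lemma iasCol_chi (v u : V) : iasCol A (v, 1) u = A u v := by
  simp [iasCol, IASmat]

/-- The key isotropy computation: if `a + A b = 0` and `a' + A b' = 0` with `A` symmetric,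
then `a · b' = a' · b` (over GF(2)). -/
lemma pairing (hsym : A.IsSymm) (a b a' b' : V → ZMod 2)
    (h1 : ∀ u, a u + ∑ w, A u w * b w = 0)
    (h2 : ∀ u, a' u + ∑ w, A u w * b' w = 0) :
    ∑ u, a u * b' u = ∑ u, a' u * b u := by
  have hneg : ∀ x : ZMod 2, -x = x := by decide
  have ha : ∀ u, a u = ∑ w, A u w * b w := by
    intro u
    have h := h1 u
    rw [← hneg (∑ w, A u w * b w)]
    linear_combination h
  have ha' : ∀ u, a' u = ∑ w, A u w * b' w := by
    intro u
    have h := h2 u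
    rw [← hneg (∑ w, A u w * b' w)]
    linear_combination h
  calc ∑ u, a u * b' u = ∑ u, ∑ w, A u w * b w * b' u := by
        refine Finset.sum_congr rfl fun u _ => ?_
        rw [ha u, Finset.sum_mul]
    _ = ∑ w, ∑ u, A u w * b w * b' u := Finset.sum_comm
    _ = ∑ w, (∑ u, A w u * b' u) * b w := by
        refine Finset.sum_congr rfl fun w _ => ?_
        rw [Finset.sum_mul]
        refine Finset.sum_congr rfl fun u _ => ?_
        have : A u w = A w u := by
          conv_lhs => rw [← hsym]
          rfl
        rw [this]; ring
    _ = ∑ u, a' u * b u := by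
        refine Finset.sum_congr rfl fun w _ => ?_
        rw [← ha' w]

/-- Concrete linear independence of the labelled columns of `IASmat` over `U`. -/
def IndepOn (U : Finset V) (x : V → Fin 3) : Prop :=
  ∀ g : V → ZMod 2, (∀ u, ∑ w ∈ U, g w * iasCol A (w, x w) u = 0) → ∀ w ∈ U, g w = 0

lemma expand_sum (U : Finset V) (x : V → Fin 3) (g : V → ZMod 2) (u : V) :
    ∑ w ∈ U, g w * iasCol A (w, x w) u
      = (if u ∈ U then g u * alph (x u) else 0) + ∑ w ∈ U, g w * bet (x w) * A u w := by
  have : ∀ w ∈ U, g w * iasCol A (w, x w) u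
      = (if u = w then g w * alph (x w) else 0) + g w * bet (x w) * A u w := by
    intro w _
    rw [iasCol_eq]
    rw [mul_add]
    congr 1
    · rw [mul_ite, mul_ite]
      split <;> ring
    · ring
  rw [Finset.sum_congr rfl this, Finset.sum_add_distrib]
  congr 1
  exact Finset.sum_ite_eq U u (fun w => g w * alph (x w))

/-- The extension step: an independent labelled subtransversal can be extended by any vertex. -/
lemma indepOn_insert (hsym : A.IsSymm) {U : Finset V} {x : V → Fin 3} {v : V} (hv : v ∉ U)
    (h : IndepOn A U x) :
    ∃ i : Fin 3, IndepOn A (insert v U) (Function.update x v i) := by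
  by_contra hcon
  push_neg at hcon
  have main : ∀ i : Fin 3, ∃ g : V → ZMod 2, g v = 1 ∧
      (∀ u, iasCol A (v, i) u + ∑ w ∈ U, g w * iasCol A (w, x w) u = 0) := by
    intro i
    have hni := hcon i
    rw [IndepOn] at hni
    push_neg at hni
    obtain ⟨g, hgsum, w0, hw0U, hw0⟩ := hni
    have hupd : ∀ w ∈ U, Function.update x v i w = x w := by
      intro w hw
      exact Function.update_of_ne (fun hwv => hv (by rw [← hwv]; exact hw)) _ _
    have hsplit : ∀ u, g v * iasCol A (v, i) u + ∑ w ∈ U, g w * iasCol A (w, x w) u = 0 := by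
      intro u
      have := hgsum u
      rw [Finset.sum_insert hv] at this
      rw [Function.update_self] at this
      rw [← this]
      congr 1
      refine Finset.sum_congr rfl fun w hw => ?_
      rw [hupd w hw]
    by_cases hgv : g v = 0
    · exfalso
      have hz : ∀ u, ∑ w ∈ U, g w * iasCol A (w, x w) u = 0 := by
        intro u
        have := hsplit u
        rwa [hgv, zero_mul, zero_add] at this
      have hall := h g hz
      rcases Finset.mem_insert.mp hw0U with rfl | hw0U'
      · exact hw0 hgv
      · exact hw0 (hall w0 hw0U')
    · have hone : g v = 1 := by
        have : ∀ a : ZMod 2, a ≠ 0 → a = 1 := by decide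
        exact this _ hgv
      refine ⟨g, hone, fun u => ?_⟩
      have := hsplit u
      rwa [hone, one_mul] at this
  obtain ⟨lg, hl1, hl⟩ := main 0
  obtain ⟨mg, hm1, hm⟩ := main 1
  -- set up the four vectors for the pairing lemma
  set a : V → ZMod 2 := fun u =>
    (if u = v then 1 else 0) + (if u ∈ U then lg u * alph (x u) else 0) with ha_def
  set b : V → ZMod 2 := fun u => if u ∈ U then lg u * bet (x u) else 0 with hb_def
  set a' : V → ZMod 2 := fun u => if u ∈ U then mg u * alph (x u) else 0 with ha'_def
  set b' : V → ZMod 2 := fun u =>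
    (if u = v then 1 else 0) + (if u ∈ U then mg u * bet (x u) else 0) with hb'_def
  have hbsum : ∀ u, ∑ w, A u w * b w = ∑ w ∈ U, lg w * bet (x w) * A u w := by
    intro u
    rw [hb_def]
    simp only [mul_ite, mul_zero]
    rw [Finset.sum_ite_mem, Finset.univ_inter]
    exact Finset.sum_congr rfl fun w _ => by ring
  have hb'sum : ∀ u, ∑ w, A u w * b' w
      = A u v + ∑ w ∈ U, mg w * bet (x w) * A u w := by
    intro u
    rw [hb'_def]
    simp only [mul_add]
    rw [Finset.sum_add_distrib]
    congr 1
    · simp only [mul_ite, mul_one, mul_zero]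
      rw [Finset.sum_ite_eq' Finset.univ v (fun w => A u w)]
      simp
    · simp only [mul_ite, mul_zero]
      rw [Finset.sum_ite_mem, Finset.univ_inter]
      exact Finset.sum_congr rfl fun w _ => by ring
  have h1 : ∀ u, a u + ∑ w, A u w * b w = 0 := by
    intro u
    rw [hbsum u, ha_def]
    have := hl u
    rw [expand_sum] at this
    rw [iasCol_phi] at this
    calc (if u = v then 1 else 0) + (if u ∈ U then lg u * alph (x u) else 0)
          + ∑ w ∈ U, lg w * bet (x w) * A u w
        = (if u = v then 1 else 0) + ((if u ∈ U then lg u * alph (x u) else 0)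
          + ∑ w ∈ U, lg w * bet (x w) * A u w) := by ring
      _ = 0 := this
  have h2 : ∀ u, a' u + ∑ w, A u w * b' w = 0 := by
    intro u
    rw [hb'sum u, ha'_def]
    have := hm u
    rw [expand_sum] at this
    rw [iasCol_chi] at this
    calc (if u ∈ U then mg u * alph (x u) else 0)
          + (A u v + ∑ w ∈ U, mg w * bet (x w) * A u w)
        = A u v + ((if u ∈ U then mg u * alph (x u) else 0)
          + ∑ w ∈ U, mg w * bet (x w) * A u w) := by ring
      _ = 0 := this
  have hpair := pairing A hsym a b a' b' h1 h2
  -- now compute both sides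
  have hS1 : ∑ u, a u * b' u = 1 + ∑ u ∈ U, lg u * alph (x u) * (mg u * bet (x u)) := by
    rw [ha_def, hb'_def]
    simp only [add_mul, mul_add]
    rw [Finset.sum_add_distrib, Finset.sum_add_distrib, Finset.sum_add_distrib]
    have t1 : ∑ u, (if u = v then (1:ZMod 2) else 0) * (if u = v then 1 else 0) = 1 := by
      simp only [ite_mul, one_mul, zero_mul]
      rw [Finset.sum_ite_eq' Finset.univ v (fun u => if u = v then (1:ZMod 2) else 0)]
      simp
    have t2 : ∑ u, (if u = v then (1:ZMod 2) else 0) * (if u ∈ U then mg u * bet (x u) else 0)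
        = 0 := by
      simp only [ite_mul, one_mul, zero_mul]
      rw [Finset.sum_ite_eq' Finset.univ v _]
      simp [Finset.mem_univ, hv]
    have t3 : ∑ u, (if u ∈ U then lg u * alph (x u) else 0) * (if u = v then (1:ZMod 2) else 0)
        = 0 := by
      simp only [mul_ite, mul_one, mul_zero]
      rw [Finset.sum_ite_eq' Finset.univ v _]
      simp [Finset.mem_univ, hv]
    have t4 : ∑ u, (if u ∈ U then lg u * alph (x u) else 0) * (if u ∈ U then mg u * bet (x u) else 0)
        = ∑ u ∈ U, lg u * alph (x u) * (mg u * bet (x u)) := by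
      simp only [ite_mul, zero_mul]
      simp only [mul_ite, mul_zero]
      rw [Finset.sum_ite_mem, Finset.univ_inter]
      refine Finset.sum_congr rfl fun u hu => by rw [if_pos hu]
    rw [t1, t2, t3, t4]
    ring
  have hS2 : ∑ u, a' u * b u = ∑ u ∈ U, lg u * alph (x u) * (mg u * bet (x u)) := by
    rw [ha'_def, hb_def]
    have heach : ∀ u, (if u ∈ U then mg u * alph (x u) else 0) * (if u ∈ U then lg u * bet (x u) else 0)
        = if u ∈ U then lg u * alph (x u) * (mg u * bet (x u)) else 0 := by
      intro u
      by_cases hu : u ∈ U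
      · simp only [if_pos hu]; ring
      · simp [if_neg hu]
    rw [Finset.sum_congr rfl fun u _ => heach u]
    rw [Finset.sum_ite_mem, Finset.univ_inter]
  rw [hS1, hS2] at hpair
  have hcontr : (1 : ZMod 2) = 0 := by linear_combination hpair
  exact one_ne_zero hcontr

lemma indepOn_extend_aux (hsym : A.IsSymm) :
    ∀ (k : ℕ) (U : Finset V) (x : V → Fin 3),
      (Finset.univ \ U).card ≤ k → IndepOn A U x →
      ∃ t : V → Fin 3, (∀ w ∈ U, t w = x w) ∧ IndepOn A Finset.univ t := by
  intro k
  induction k with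
  | zero =>
    intro U x hcard h
    have hU : U = Finset.univ := by
      have : Finset.univ \ U = ∅ := Finset.card_eq_zero.mp (Nat.le_zero.mp hcard)
      have hsub : Finset.univ ⊆ U := by
        intro w _
        by_contra hw
        have : w ∈ Finset.univ \ U := Finset.mem_sdiff.mpr ⟨Finset.mem_univ w, hw⟩
        simp [*] at this
      exact Finset.eq_univ_of_forall fun w => hsub (Finset.mem_univ w)
    subst hU
    exact ⟨x, fun _ _ => rfl, h⟩
  | succ k ih =>
    intro U x hcard h
    by_cases hU : U = Finset.univ
    · subst hU
      exact ⟨x, fun _ _ => rfl, h⟩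
    · obtain ⟨v, hv⟩ : ∃ v, v ∉ U := by
        by_contra hc
        push_neg at hc
        exact hU (Finset.eq_univ_of_forall hc)
      obtain ⟨i, hi⟩ := indepOn_insert A hsym hv h
      have hvmem : v ∈ Finset.univ \ U := Finset.mem_sdiff.mpr ⟨Finset.mem_univ v, hv⟩
      have hins : Finset.univ \ insert v U = (Finset.univ \ U).erase v := by
        ext w
        simp only [Finset.mem_sdiff, Finset.mem_erase, Finset.mem_insert, Finset.mem_univ,
          true_and]
        tauto
      have hcard' : (Finset.univ \ insert v U).card ≤ k := by
        rw [hins, Finset.card_erase_of_mem hvmem]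
        have hpos : 1 ≤ (Finset.univ \ U).card := Finset.card_pos.mpr ⟨v, hvmem⟩
        omega
      obtain ⟨t, ht, htI⟩ := ih (insert v U) (Function.update x v i) hcard' hi
      refine ⟨t, fun w hw => ?_, htI⟩
      rw [ht w (Finset.mem_insert_of_mem hw),
        Function.update_of_ne (fun hwv => hv (by rw [← hwv]; exact hw)) _ _]

lemma indepOn_extend (hsym : A.IsSymm) (U : Finset V) (x : V → Fin 3) (h : IndepOn A U x) :
    ∃ t : V → Fin 3, (∀ w ∈ U, t w = x w) ∧ IndepOn A Finset.univ t :=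
  indepOn_extend_aux A hsym (Finset.univ \ U).card U x le_rfl h

lemma indepOn_univ_iff (t : V → Fin 3) :
    IndepOn A Finset.univ t ↔ LinearIndependent (ZMod 2) (fun v : V => iasCol A (v, t v)) := by
  rw [Fintype.linearIndependent_iff]
  constructor
  · intro h g hg w
    refine h g (fun u => ?_) w (Finset.mem_univ w)
    have := congrFun hg u
    simpa [Finset.sum_apply, smul_eq_mul] using this
  · intro h g hg w _
    refine h g ?_ w
    funext u
    simpa [Finset.sum_apply, smul_eq_mul] using hg u

lemma indepOn_iff (U : Finset V) (x : V → Fin 3) :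
    IndepOn A U x ↔
      LinearIndependent (ZMod 2) (fun w : {w // w ∈ U} => iasCol A (w.1, x w.1)) := by
  rw [Fintype.linearIndependent_iff]
  constructor
  · intro h g hg w
    set G : V → ZMod 2 := fun u => if hu : u ∈ U then g ⟨u, hu⟩ else 0 with hG
    have hzero : ∀ u, ∑ w ∈ U, G w * iasCol A (w, x w) u = 0 := by
      intro u
      have := congrFun hg u
      simp only [Finset.sum_apply, Pi.smul_apply, smul_eq_mul, Pi.zero_apply] at this
      rw [← this, ← Finset.sum_coe_sort U (fun w => G w * iasCol A (w, x w) u)]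
      refine Finset.sum_congr rfl fun i _ => ?_
      simp [hG, i.2]
    have := h G hzero w.1 w.2
    simpa [hG, w.2] using this
  · intro h g hg w hw
    have hres : ∀ i : {w // w ∈ U}, g i.1 = 0 := by
      apply h (fun i => g i.1)
      funext u
      simp only [Finset.sum_apply, Pi.smul_apply, smul_eq_mul, Pi.zero_apply]
      rw [Finset.sum_coe_sort U (fun w => g w * iasCol A (w, x w) u)]
      exact hg u
    exact hres ⟨w, hw⟩

end GF2

/-! ### Rank comparison lemmas -/

lemma colSpanRank_map {V W : Type} [Fintype V] (K : Type) [Field K]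
    (P : Matrix V W ℤ) (S : Set W) :
    colSpanRank K (P.map (Int.cast : ℤ → K)) S
      = Module.finrank K ↥(Submodule.span K ((fun p (v : V) => ((P v p : K))) '' S)) := rfl

lemma colSpanRank_le_real {V W : Type} [Fintype V] (P : Matrix V W ℤ)
    (F : Type) [Field F] (S : Set W) :
    colSpanRank F (P.map (Int.cast : ℤ → F)) S ≤ colSpanRank ℝ (P.map (Int.cast : ℤ → ℝ)) S := by
  classical
  rw [colSpanRank_map, colSpanRank_map]
  set cF : W → V → F := fun p v => ((P v p : F)) with hcF
  set cR : W → V → ℝ := fun p v => ((P v p : ℝ)) with hcR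
  obtain ⟨d, hdS, hdspan, hdind⟩ := exists_linearIndependent F (cF '' S)
  have hdfin : d.Finite := hdind.setFinite
  haveI := hdfin.fintype
  have hsec : ∀ y : d, ∃ p, p ∈ S ∧ cF p = (y : V → F) := by
    intro y
    obtain ⟨p, hp, hc⟩ := hdS y.2
    exact ⟨p, hp, hc⟩
  choose τ hτS hτc using hsec
  have hfam : (fun (y : d) => fun (v : V) => ((P v (τ y) : F))) = fun y : d => (y : V → F) := by
    funext y
    exact hτc y
  have hindF : LinearIndependent F (fun (y : d) => fun (v : V) => ((P v (τ y) : F))) := by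
    rw [hfam]
    exact hdind
  have hindR := real_indep_of_F_indep F (fun (y : d) (v : V) => P v (τ y)) hindF
  have hrange : Set.range (fun (y : d) => fun (v : V) => ((P v (τ y) : ℝ)))
      = cR '' (Set.range τ) := by
    rw [show (fun (y : d) => fun (v : V) => ((P v (τ y) : ℝ))) = cR ∘ τ from rfl,
      Set.range_comp]
  have hcard : Fintype.card d = Module.finrank ℝ ↥(Submodule.span ℝ (cR '' Set.range τ)) := by
    rw [← hrange]
    exact (finrank_span_eq_card hindR).symm
  have hsub : Submodule.span ℝ (cR '' Set.range τ) ≤ Submodule.span ℝ (cR '' S) := by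
    apply Submodule.span_mono
    apply Set.image_mono
    rintro p ⟨y, rfl⟩
    exact hτS y
  have hmono := Submodule.finrank_mono hsub
  have hcardd : Module.finrank F ↥(Submodule.span F (cF '' S)) = Fintype.card d := by
    rw [← hdspan, finrank_span_set_eq_card hdind, Set.toFinset_card]
  omega

lemma colSpanRank_ge_real {V : Type} [Fintype V] [DecidableEq V] (A : Matrix V V (ZMod 2))
    (hsym : A.IsSymm) (P : Matrix V (V × Fin 3) ℤ)
    (hunim : ∀ t : V → Fin 3,
      (Matrix.of fun v u => P v (u, t u)).det ∈ ({-1, 0, 1} : Set ℤ))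
    (hR : ∀ S : Set (V × Fin 3), Subtransversal3 S →
      colSpanRank ℝ (P.map (Int.cast : ℤ → ℝ)) S = colSpanRank (ZMod 2) (IASmat A) S)
    (F : Type) [Field F] (S : Set (V × Fin 3)) (hS : Subtransversal3 S) :
    colSpanRank ℝ (P.map (Int.cast : ℤ → ℝ)) S ≤ colSpanRank F (P.map (Int.cast : ℤ → F)) S := by
  classical
  set cF : (V × Fin 3) → V → F := fun p v => ((P v p : F)) with hcF
  set cR : (V × Fin 3) → V → ℝ := fun p v => ((P v p : ℝ)) with hcR
  obtain ⟨b, hbS, hbspan, hbind⟩ := exists_linearIndependent ℝ (cR '' S)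
  have hbfin : b.Finite := hbind.setFinite
  haveI := hbfin.fintype
  have hsec : ∀ y : b, ∃ p, p ∈ S ∧ cR p = (y : V → ℝ) := by
    intro y
    obtain ⟨p, hp, hc⟩ := hbS y.2
    exact ⟨p, hp, hc⟩
  choose σ hσS hσc using hsec
  set B : Set (V × Fin 3) := Set.range σ with hB
  have hBS : B ⊆ S := by
    rintro p ⟨y, rfl⟩
    exact hσS y
  have hSB : Subtransversal3 B := fun v i j hi hj => hS v i j (hBS hi) (hBS hj)
  -- choose labels
  have hxex : ∀ v : V, ∃ i : Fin 3, ((∃ j, (v, j) ∈ B) → (v, i) ∈ B) := by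
    intro v
    by_cases h : ∃ j, (v, j) ∈ B
    · obtain ⟨j, hj⟩ := h
      exact ⟨j, fun _ => hj⟩
    · exact ⟨0, fun hc => absurd hc h⟩
  choose x hxspec using hxex
  set UB : Finset V := Finset.univ.filter (fun v => (v, x v) ∈ B) with hUB
  have hmemUB : ∀ v, v ∈ UB ↔ (v, x v) ∈ B := by
    intro v
    simp [hUB]
  have hBid : ∀ p ∈ B, p = (p.1, x p.1) := by
    intro p hp
    have h1 : (p.1, x p.1) ∈ B := hxspec p.1 ⟨p.2, by rwa [← Prod.mk.eta (p := p)] at hp⟩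
    have h2 := hSB p.1 p.2 (x p.1) (by rwa [← Prod.mk.eta (p := p)] at hp) h1
    exact Prod.ext rfl h2
  have hB1 : ∀ p ∈ B, p.1 ∈ UB := by
    intro p hp
    rw [hmemUB]
    rw [← hBid p hp]
    exact hp
  have hBw : ∀ w ∈ UB, (w, x w) ∈ B := fun w hw => (hmemUB w).mp hw
  -- generic image-range identity
  have himg : ∀ {γ : Type} (c : (V × Fin 3) → γ),
      c '' B = Set.range (fun w : {w // w ∈ UB} => c (w.1, x w.1)) := by
    intro γ c
    ext y
    constructor
    · rintro ⟨p, hp, rfl⟩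
      refine ⟨⟨p.1, hB1 p hp⟩, ?_⟩
      show c (p.1, x p.1) = c p
      rw [← hBid p hp]
    · rintro ⟨w, rfl⟩
      exact ⟨(w.1, x w.1), hBw w.1 w.2, rfl⟩
  -- injectivity of cR on B and bijection with b
  have hinj : ∀ p ∈ B, ∀ q ∈ B, cR p = cR q → p = q := by
    rintro _ ⟨y, rfl⟩ _ ⟨z, rfl⟩ h
    rw [hσc y, hσc z] at h
    rw [Subtype.ext h]
  have hcRB : cR '' B = b := by
    ext y
    constructor
    · rintro ⟨p, ⟨z, rfl⟩, rfl⟩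
      rw [hσc z]
      exact z.2
    · intro hy
      exact ⟨σ ⟨y, hy⟩, ⟨⟨y, hy⟩, rfl⟩, hσc _⟩
  have hcardUBb : Fintype.card {w // w ∈ UB} = Fintype.card b := by
    have hmem : ∀ w : {w // w ∈ UB}, cR (w.1, x w.1) ∈ b := by
      intro w
      rw [← hcRB]
      exact ⟨(w.1, x w.1), hBw w.1 w.2, rfl⟩
    apply Fintype.card_of_bijective
      (f := fun w : {w // w ∈ UB} => (⟨cR (w.1, x w.1), hmem w⟩ : b))
    constructor
    · intro w w' h
      have h' : cR (w.1, x w.1) = cR (w'.1, x w'.1) := congrArg Subtype.val h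
      have := hinj _ (hBw w.1 w.2) _ (hBw w'.1 w'.2) h'
      exact Subtype.ext (congrArg Prod.fst this)
    · intro y
      have hσB : σ y ∈ B := ⟨y, rfl⟩
      refine ⟨⟨(σ y).1, hB1 _ hσB⟩, ?_⟩
      apply Subtype.ext
      show cR ((σ y).1, x (σ y).1) = (y : V → ℝ)
      rw [← hBid _ hσB, hσc y]
  -- rank over ℝ of S
  have hrankRS : colSpanRank ℝ (P.map (Int.cast : ℤ → ℝ)) S = Fintype.card b := by
    rw [colSpanRank_map, ← hcR, ← hbspan, finrank_span_set_eq_card hbind, Set.toFinset_card]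
  -- GF(2) independence on B
  have hranklhs : colSpanRank ℝ (P.map (Int.cast : ℤ → ℝ)) B = Fintype.card b := by
    rw [colSpanRank_map, ← hcR, hcRB, finrank_span_set_eq_card hbind, Set.toFinset_card]
  have hA2 : colSpanRank (ZMod 2) (IASmat A) B = Fintype.card b := by
    rw [← hR B hSB]
    exact hranklhs
  have hindA : LinearIndependent (ZMod 2)
      (fun w : {w // w ∈ UB} => iasCol A (w.1, x w.1)) := by
    apply linearIndependent_iff_card_eq_finrank_span.mpr
    rw [hcardUBb]
    show Fintype.card b
      = Module.finrank (ZMod 2) ↥(Submodule.span (ZMod 2)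
          (Set.range (fun w : {w // w ∈ UB} => iasCol A (w.1, x w.1))))
    rw [← himg (iasCol A)]
    exact hA2.symm
  have hIndOn : IndepOn A UB x := (indepOn_iff A UB x).mpr hindA
  obtain ⟨t, ht, htI⟩ := indepOn_extend A hsym UB x hIndOn
  -- the full transversal T
  set T : Set (V × Fin 3) := Set.range (fun v => (v, t v)) with hT
  have hST : Subtransversal3 T := by
    rintro v i j ⟨u, hu⟩ ⟨u', hu'⟩
    injection hu with h1 h2
    injection hu' with h1' h2'
    subst h1
    subst h1'
    rw [← h2, ← h2']
  have hA2T : colSpanRank (ZMod 2) (IASmat A) T = Fintype.card V := by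
    show Module.finrank (ZMod 2) ↥(Submodule.span (ZMod 2)
      ((fun p (u : V) => IASmat A u p) '' T)) = Fintype.card V
    have himgT : (fun p (u : V) => IASmat A u p) '' T
        = Set.range (fun v : V => iasCol A (v, t v)) := by
      rw [show ((fun p (u : V) => IASmat A u p) '' T)
        = Set.range ((fun p (u : V) => IASmat A u p) ∘ (fun v => (v, t v))) from
        (Set.range_comp _ _).symm]
      rfl
    rw [himgT]
    exact finrank_span_eq_card ((indepOn_univ_iff A t).mp htI)
  have hRrankT : colSpanRank ℝ (P.map (Int.cast : ℤ → ℝ)) T = Fintype.card V := by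
    rw [hR T hST]
    exact hA2T
  -- the transversal matrix is unimodular
  set Mt : Matrix V V ℤ := Matrix.of fun v u => P v (u, t u) with hMt
  have hcolsR : Set.range (fun u => (Mt.map (Int.cast : ℤ → ℝ))ᵀ u) = cR '' T := by
    rw [show (fun u => (Mt.map (Int.cast : ℤ → ℝ))ᵀ u) = cR ∘ (fun u => (u, t u)) from rfl,
      Set.range_comp]
  have hindMtR : LinearIndependent ℝ (fun u => (Mt.map (Int.cast : ℤ → ℝ))ᵀ u) := by
    apply linearIndependent_iff_card_eq_finrank_span.mpr
    show Fintype.card V = Module.finrank ℝ ↥(Submodule.span ℝ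
      (Set.range (fun u => (Mt.map (Int.cast : ℤ → ℝ))ᵀ u)))
    rw [hcolsR]
    rw [colSpanRank_map, ← hcR] at hRrankT
    exact hRrankT.symm
  have hUnitR : IsUnit (Mt.map (Int.cast : ℤ → ℝ)) :=
    Matrix.linearIndependent_cols_iff_isUnit.mp hindMtR
  have hdetR : ((Mt.det : ℤ) : ℝ) ≠ 0 := by
    have hu := (Matrix.isUnit_iff_isUnit_det _).mp hUnitR
    rw [show Mt.map (Int.cast : ℤ → ℝ) = (Int.castRingHom ℝ).mapMatrix Mt from rfl,
      ← RingHom.map_det] at hu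
    exact hu.ne_zero
  have hdet : Mt.det ≠ 0 := fun h => by rw [h] at hdetR; simp at hdetR
  have hpm := hunim t
  rw [← hMt] at hpm
  simp only [Set.mem_insert_iff, Set.mem_singleton_iff] at hpm
  have hdet1 : Mt.det = 1 ∨ Mt.det = -1 := by tauto
  have hUnitF : IsUnit (Mt.map (Int.cast : ℤ → F)) := by
    apply (Matrix.isUnit_iff_isUnit_det _).mpr
    rw [show Mt.map (Int.cast : ℤ → F) = (Int.castRingHom F).mapMatrix Mt from rfl,
      ← RingHom.map_det]
    rcases hdet1 with h | h <;> rw [h] <;> simp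
  have hindMtF : LinearIndependent F (fun u => (Mt.map (Int.cast : ℤ → F))ᵀ u) :=
    Matrix.linearIndependent_cols_iff_isUnit.mpr hUnitF
  -- restrict to the columns of B
  have hfamF : LinearIndependent F (fun w : {w // w ∈ UB} => cF (w.1, x w.1)) := by
    have hcomp : (fun w : {w // w ∈ UB} => cF (w.1, x w.1))
        = (fun u => (Mt.map (Int.cast : ℤ → F))ᵀ u) ∘ (fun w : {w // w ∈ UB} => w.1) := by
      funext w
      show cF (w.1, x w.1) = fun v => ((P v (w.1, t w.1) : F))
      rw [← ht w.1 w.2]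
    rw [hcomp]
    exact hindMtF.comp _ Subtype.val_injective
  have hrankFB : Fintype.card {w // w ∈ UB}
      = Module.finrank F ↥(Submodule.span F (cF '' B)) := by
    rw [himg cF]
    exact linearIndependent_iff_card_eq_finrank_span.mp hfamF
  have hmono : Module.finrank F ↥(Submodule.span F (cF '' B))
      ≤ Module.finrank F ↥(Submodule.span F (cF '' S)) :=
    Submodule.finrank_mono (Submodule.span_mono (Set.image_mono hBS))
  rw [colSpanRank_map F, ← hcF, hrankRS]
  omega

/-- If an integer matrix `P` with rows `V` and columns `W(G)` is transversely
unimodular and represents `Z₃(G)` over `ℝ`, then its entrywise image in any field `F`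
represents `Z₃(G)` over `F`; in particular `Z₃(G)` is representable over every field. -/
theorem Z3_regular_of_transversely_unimodular
    {V : Type} [Fintype V] [DecidableEq V] (A : Matrix V V (ZMod 2)) (hsym : A.IsSymm)
    (P : Matrix V (V × Fin 3) ℤ)
    (hunim : ∀ t : V → Fin 3,
      (Matrix.of fun v u => P v (u, t u)).det ∈ ({-1, 0, 1} : Set ℤ))
    (hR : ∀ S : Set (V × Fin 3), Subtransversal3 S →
      colSpanRank ℝ (P.map (Int.cast : ℤ → ℝ)) S = colSpanRank (ZMod 2) (IASmat A) S) :
    ∀ (F : Type) [Field F],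
      (∀ S : Set (V × Fin 3), Subtransversal3 S →
        colSpanRank F (P.map (Int.cast : ℤ → F)) S
          = colSpanRank (ZMod 2) (IASmat A) S) ∧
      Z3Rep F A := by
  intro F _
  have hmain : ∀ S : Set (V × Fin 3), Subtransversal3 S →
      colSpanRank F (P.map (Int.cast : ℤ → F)) S = colSpanRank (ZMod 2) (IASmat A) S := by
    intro S hS
    have hle := colSpanRank_le_real P F S
    have hge := colSpanRank_ge_real A hsym P hunim hR F S hS
    have h := hR S hS
    omega
  refine ⟨hmain, ?_⟩
  set e := Fintype.equivFin V with he
  refine ⟨Fintype.card V,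
    Matrix.of (fun (i : Fin (Fintype.card V)) p => ((P (e.symm i) p : F))), ?_⟩
  intro S hS
  rw [← hmain S hS]
  set ℓ : (V → F) ≃ₗ[F] (Fin (Fintype.card V) → F) := LinearEquiv.funCongrLeft F F e.symm
    with hℓ
  show Module.finrank F ↥(Submodule.span F
      ((fun p (i : Fin (Fintype.card V)) => ((P (e.symm i) p : F))) '' S)) = _
  rw [colSpanRank_map]
  have himg : (fun p (i : Fin (Fintype.card V)) => ((P (e.symm i) p : F))) '' S
      = ℓ.toLinearMap '' ((fun p (v : V) => ((P v p : F))) '' S) := by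
    rw [← Set.image_comp]
    rfl
  rw [himg, Submodule.span_image, LinearEquiv.finrank_map_eq]
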